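/- (Asymptotic Huygens principle on homogeneous trees.) Let u solve the Cauchy problem for the shifted wave equation on T_q with finitely supported data f, g : T_q → ℂ, fix a base vertex 0 and write |x| = d(x,0). Let (N_n)_{n ∈ ℤ} be positive integers with N_n → +∞ and N_n/|n| → 0 as n → ±∞. Then the three expressions Σ_{x : |x| < |n| − N_n} |u(x,n)|², Σ_{(x,y) : |x| < |n| − N_n, |y| < |n| − N_n, d(x,y) = 2} |u(x,n) − u(y,n)|² (sum over ordered pairs), and Σ_{x : |x| < |n| − N_n} |u(x,n+1) − u(x,n−1)|² all tend to 0 as n → +∞ and as n → −∞. -/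

import Mathlib

open scoped BigOperators

/-- A homogeneous tree of degree `q + 1`: a connected acyclic simple graph in which
every vertex has exactly `q + 1` neighbours. Spheres for the graph distance are finite. -/
structure HomTree (q : ℕ) where
  V : Type
  G : SimpleGraph V
  conn : G.Connected
  acyclic : G.IsAcyclic
  sphereFin : ∀ (x : V) (n : ℕ), {y : V | G.dist x y = n}.Finite
  nbrFin : ∀ x : V, {y : V | G.Adj x y}.Finite
  degree : ∀ x : V, (nbrFin x).toFinset.card = q + 1

namespace HomTree

variable {q : ℕ}

/-- The sphere `S(x,n)` as a finite set. -/
noncomputable def sphere (T : HomTree q) (x : T.V) (n : ℕ) : Finset T.V :=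
  (T.sphereFin x n).toFinset

/-- The volume `δ(n)` of spheres. -/
def delta (q n : ℕ) : ℕ := if n = 0 then 1 else (q + 1) * q ^ (n - 1)

/-- The combinatorial Laplacian on the tree. -/
noncomputable def lap (T : HomTree q) (f : T.V → ℂ) (x : T.V) : ℂ :=
  f x - (1 / ((q : ℂ) + 1)) * ∑ y ∈ T.sphere x 1, f y

/-- Spherical means. -/
noncomputable def sphMean (T : HomTree q) (f : T.V → ℂ) (x : T.V) (n : ℕ) : ℂ :=
  (1 / (delta q n : ℂ)) * ∑ y ∈ T.sphere x n, f y

/-- Real powers of `q`, as a complex number. -/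
noncomputable def qpow (q : ℕ) (x : ℝ) : ℂ := (((q : ℝ) ^ x : ℝ) : ℂ)

/-- `γ = 2 / (q^{1/2} + q^{-1/2})`. -/
noncomputable def gam (q : ℕ) : ℝ := 2 / ((q : ℝ) ^ ((1 : ℝ)/2) + (q : ℝ) ^ (-(1 : ℝ)/2))

/-- The combinatorial Laplacian on `ℤ`. -/
noncomputable def lapZ (φ : ℤ → ℂ) (m : ℤ) : ℂ := φ m - (φ (m + 1) + φ (m - 1)) / 2

lemma ball_finite (T : HomTree q) (x : T.V) (n : ℕ) :
    {y : T.V | T.G.dist x y ≤ n}.Finite := by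
  have h : {y : T.V | T.G.dist x y ≤ n} ⊆ ⋃ m ∈ Set.Iic n, {y : T.V | T.G.dist x y = m} := by
    intro y hy
    exact Set.mem_biUnion hy rfl
  exact (((Set.finite_Iic n)).biUnion fun m _ => T.sphereFin x m).subset h

/-- The ball `B(x,n)` as a finite set. -/
noncomputable def ball (T : HomTree q) (x : T.V) (n : ℕ) : Finset T.V :=
  (T.ball_finite x n).toFinset

/-- The operator `M_n` (with `M_n = 0` for `n < 0`). -/
noncomputable def Mop (T : HomTree q) (n : ℤ) (f : T.V → ℂ) (x : T.V) : ℂ :=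
  if 0 ≤ n then
    qpow q (-(n : ℝ) / 2) *
      ∑ y ∈ (T.ball x n.toNat).filter (fun y => (n.toNat - T.G.dist x y) % 2 = 0), f y
  else 0

/-- The operator `C_n = (M_{|n|} - M_{|n|-2})/2`, `C_0 = Id`. -/
noncomputable def Cop (T : HomTree q) (n : ℤ) (f : T.V → ℂ) (x : T.V) : ℂ :=
  if n = 0 then f x else (Mop T |n| f x - Mop T (|n| - 2) f x) / 2

/-- The operator `S_n = sign(n) · M_{|n|-1}`. -/
noncomputable def Sop (T : HomTree q) (n : ℤ) (g : T.V → ℂ) (x : T.V) : ℂ :=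
  (n.sign : ℂ) * Mop T (|n| - 1) g x

/-- `u` solves the shifted wave equation on the tree. -/
def IsWaveSol (T : HomTree q) (u : T.V → ℤ → ℂ) : Prop :=
  ∀ (x : T.V) (n : ℤ),
    u x (n + 1) + u x (n - 1) = qpow q (-(1 : ℝ)/2) * ∑ y ∈ T.sphere x 1, u y n

/-- `u` solves the Cauchy problem for the shifted wave equation with data `f`, `g`. -/
def IsCauchy (T : HomTree q) (f g : T.V → ℂ) (u : T.V → ℤ → ℂ) : Prop :=
  IsWaveSol T u ∧ (∀ x, u x 0 = f x) ∧ ∀ x, (u x 1 - u x (-1)) / 2 = g x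

/-- Kinetic energy. -/
noncomputable def kinetic (T : HomTree q) (u : T.V → ℤ → ℂ) (n : ℤ) : ℝ :=
  (1/2) * ∑' x : T.V, ‖(u x (n + 1) - u x (n - 1)) / 2‖ ^ 2

/-- Potential energy. -/
noncomputable def potential (T : HomTree q) (u : T.V → ℤ → ℂ) (n : ℤ) : ℝ :=
  (1 / (4 * (q : ℝ))) * ∑' p : T.V × T.V,
      (if T.G.dist p.1 p.2 = 2 then ‖(u p.1 n - u p.2 n) / 2‖ ^ 2 else 0)
    - (((q : ℝ) - 1) ^ 2 / (8 * (q : ℝ))) * ∑' x : T.V, ‖u x n‖ ^ 2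

/-- The two-step Laplacian. -/
noncomputable def lap2 (T : HomTree q) (f : T.V → ℂ) (x : T.V) : ℂ :=
  f x - (1 / ((q : ℂ) * ((q : ℂ) + 1))) * ∑ y ∈ T.sphere x 2, f y

end HomTree


open HomTree in
/-- The part of `∑ |u(x,n)|²` carried by the region `|x| < |n| - N_n`. -/
noncomputable def huyg1 {q : ℕ} (T : HomTree q) (o : T.V) (N : ℤ → ℕ)
    (u : T.V → ℤ → ℂ) (n : ℤ) : ℝ :=
  ∑' x : T.V,
    if (T.G.dist x o : ℤ) < |n| - N n then ‖u x n‖ ^ 2 else 0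

open HomTree in
/-- The part of `∑_{d(x,y)=2} |u(x,n) - u(y,n)|²` carried by `|x|, |y| < |n| - N_n`. -/
noncomputable def huyg2 {q : ℕ} (T : HomTree q) (o : T.V) (N : ℤ → ℕ)
    (u : T.V → ℤ → ℂ) (n : ℤ) : ℝ :=
  ∑' p : T.V × T.V,
    if (T.G.dist p.1 o : ℤ) < |n| - N n ∧ (T.G.dist p.2 o : ℤ) < |n| - N n ∧
        T.G.dist p.1 p.2 = 2
    then ‖u p.1 n - u p.2 n‖ ^ 2 else 0

open HomTree in
/-- The part of `∑ |u(x,n+1) - u(x,n-1)|²` carried by `|x| < |n| - N_n`. -/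
noncomputable def huyg3 {q : ℕ} (T : HomTree q) (o : T.V) (N : ℤ → ℕ)
    (u : T.V → ℤ → ℂ) (n : ℤ) : ℝ :=
  ∑' x : T.V,
    if (T.G.dist x o : ℤ) < |n| - N n
    then ‖u x (n + 1) - u x (n - 1)‖ ^ 2 else 0

section TreeLemmas

open SimpleGraph

namespace HomTree

variable {q : ℕ} (T : HomTree q)

lemma mem_sphere {x y : T.V} {n : ℕ} : y ∈ T.sphere x n ↔ T.G.dist x y = n := by
  simp [sphere]

lemma mem_ball {x y : T.V} {n : ℕ} : y ∈ T.ball x n ↔ T.G.dist x y ≤ n := by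
  simp [ball]

/-- The neighbours of `x` as a finset. -/
noncomputable def nbr (x : T.V) : Finset T.V := (T.nbrFin x).toFinset

lemma mem_nbr {x y : T.V} : y ∈ T.nbr x ↔ T.G.Adj x y := by simp [nbr]

lemma sphere_one (x : T.V) : T.sphere x 1 = T.nbr x := by
  ext y; rw [T.mem_sphere, T.mem_nbr, SimpleGraph.dist_eq_one_iff_adj]

lemma card_sphere_one (x : T.V) : (T.sphere x 1).card = q + 1 := by
  rw [T.sphere_one]; exact T.degree x

lemma dist_add_dist_le_of_mem {a b v : T.V} (p : T.G.Walk a b) (hv : v ∈ p.support) :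
    T.G.dist a v + T.G.dist v b ≤ p.length := by
  classical
  conv_rhs => rw [← SimpleGraph.Walk.take_spec p hv]
  rw [SimpleGraph.Walk.length_append]
  exact Nat.add_le_add (SimpleGraph.dist_le _) (SimpleGraph.dist_le _)

lemma adj_dist_ne {u v y : T.V} (h : T.G.Adj u v) : T.G.dist y u ≠ T.G.dist y v := by
  intro he
  rcases Nat.eq_zero_or_pos (T.G.dist y u) with h0 | hpos
  · have hu : y = u := (T.conn.dist_eq_zero_iff).mp h0
    have hv : y = v := (T.conn.dist_eq_zero_iff).mp (he ▸ h0)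
    exact T.G.loopless.irrefl u (by rw [hu] at hv; exact hv ▸ h)
  · obtain ⟨p, hp, hlen⟩ := T.conn.exists_path_of_dist y u
    by_cases hmem : v ∈ p.support
    · have h1 := T.dist_add_dist_le_of_mem p hmem
      have h2 : T.G.dist v u = 1 := SimpleGraph.dist_eq_one_iff_adj.mpr h.symm
      omega
    · have hrev : v ∉ p.reverse.support := by rwa [SimpleGraph.Walk.support_reverse, List.mem_reverse]
      have hP1 : (SimpleGraph.Walk.cons h.symm p.reverse).IsPath :=
        (SimpleGraph.Walk.cons_isPath_iff _ _).mpr ⟨hp.reverse, hrev⟩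
      obtain ⟨p2, hp2, hlen2⟩ := T.conn.exists_path_of_dist v y
      have huniq := SimpleGraph.isAcyclic_iff_path_unique.mp T.acyclic
        ⟨SimpleGraph.Walk.cons h.symm p.reverse, hP1⟩ ⟨p2, hp2⟩
      have : (SimpleGraph.Walk.cons h.symm p.reverse).length = p2.length :=
        congrArg (fun P : T.G.Path v y => P.1.length) huniq
    
      rw [SimpleGraph.Walk.length_cons, SimpleGraph.Walk.length_reverse] at this
      rw [SimpleGraph.dist_comm] at hlen2
      omega

lemma adj_dist_cases {u v y : T.V} (h : T.G.Adj u v) :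
    T.G.dist y v = T.G.dist y u + 1 ∨ T.G.dist y u = T.G.dist y v + 1 := by
  have h1 : T.G.dist y v ≤ T.G.dist y u + T.G.dist u v := T.conn.dist_triangle
  have h2 : T.G.dist y u ≤ T.G.dist y v + T.G.dist v u := T.conn.dist_triangle
  have h3 : T.G.dist u v = 1 := SimpleGraph.dist_eq_one_iff_adj.mpr h
  have h4 : T.G.dist v u = 1 := SimpleGraph.dist_eq_one_iff_adj.mpr h.symm
  have h5 := T.adj_dist_ne h (y := y)
  omega

lemma closer_exists {x y : T.V} (h : T.G.dist x y ≠ 0) :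
    ∃ z, T.G.Adj y z ∧ T.G.dist x z + 1 = T.G.dist x y := by
  obtain ⟨p, hlen⟩ := T.conn.exists_walk_length_eq_dist x y
  cases hrev : p.reverse with
  | nil =>
      exfalso
      have := congrArg SimpleGraph.Walk.length hrev
      rw [SimpleGraph.Walk.length_reverse, hlen] at this
      exact h this
  | cons hadj w =>
      rename_i z
      refine ⟨z, hadj, ?_⟩
      have hle : T.G.dist x z ≤ p.length - 1 := by
        have h1 : T.G.dist x z ≤ w.length := by
          simpa using SimpleGraph.dist_le w.reverse
        have hl : w.length + 1 = p.length := by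
          have := congrArg SimpleGraph.Walk.length hrev
          rw [SimpleGraph.Walk.length_reverse, SimpleGraph.Walk.length_cons] at this
          omega
        omega
      have hge : T.G.dist x y ≤ T.G.dist x z + 1 := by
        have := T.conn.dist_triangle (u := x) (v := z) (w := y)
        have hz : T.G.dist z y = 1 := SimpleGraph.dist_eq_one_iff_adj.mpr hadj.symm
        omega
      omega

lemma closer_unique {x y z₁ z₂ : T.V} {m : ℕ} (hd : T.G.dist x y = m + 1)
    (h1 : T.G.Adj y z₁) (hd1 : T.G.dist x z₁ = m)
    (h2 : T.G.Adj y z₂) (hd2 : T.G.dist x z₂ = m) : z₁ = z₂ := by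
  have key : ∀ z : T.V, T.G.Adj y z → T.G.dist x z = m →
      ∃ (p : T.G.Walk y x), p.IsPath ∧ p.support.tail.head? = some z := by
    intro z hz hdz
    obtain ⟨p, hp, hlen⟩ := T.conn.exists_path_of_dist z x
    have hy : y ∉ p.support := by
      intro hmem
      have := T.dist_add_dist_le_of_mem p hmem
      have hzy : T.G.dist z y = 1 := SimpleGraph.dist_eq_one_iff_adj.mpr hz.symm
      have hxz : T.G.dist z x = m := by rw [SimpleGraph.dist_comm]; exact hdz
      rw [SimpleGraph.dist_comm] at hd
      omega
    refine ⟨SimpleGraph.Walk.cons hz p, (SimpleGraph.Walk.cons_isPath_iff _ _).mpr ⟨hp, hy⟩, ?_⟩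
    rw [SimpleGraph.Walk.support_cons]
    rw [SimpleGraph.Walk.support_eq_cons p]
    rfl
  obtain ⟨p1, hp1, hh1⟩ := key z₁ h1 hd1
  obtain ⟨p2, hp2, hh2⟩ := key z₂ h2 hd2
  have huniq := SimpleGraph.isAcyclic_iff_path_unique.mp T.acyclic ⟨p1, hp1⟩ ⟨p2, hp2⟩
  have : p1 = p2 := congrArg Subtype.val huniq
  rw [this] at hh1
  rw [hh1] at hh2
  exact Option.some_injective _ hh2

end HomTree

end TreeLemmas

namespace HomTree

variable {q : ℕ} (T : HomTree q)

/-- A choice of neighbour one step closer to `x`. -/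
noncomputable def step (x : T.V) (y : T.V) : T.V :=
  if h : T.G.dist x y ≠ 0 then Classical.choose (T.closer_exists h) else y

lemma step_spec {x y : T.V} (h : T.G.dist x y ≠ 0) :
    T.G.Adj y (T.step x y) ∧ T.G.dist x (T.step x y) + 1 = T.G.dist x y := by
  rw [step, dif_pos h]; exact Classical.choose_spec (T.closer_exists h)

lemma card_sphere_succ_le (x : T.V) (m : ℕ) :
    (T.sphere x (m + 2)).card ≤ q * (T.sphere x (m + 1)).card := by
  classical
  refine Finset.card_le_mul_card_image_of_maps_to (f := T.step x) ?_ q ?_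
  · intro y hy
    rw [T.mem_sphere] at hy ⊢
    have := T.step_spec (x := x) (y := y) (by omega)
    omega
  · intro z hz
    rw [T.mem_sphere] at hz
    have hz0 : T.G.dist x z ≠ 0 := by omega
    have hzs := T.step_spec hz0
    have hsub : (T.sphere x (m+2)).filter (fun y => T.step x y = z) ⊆
        (T.nbr z).erase (T.step x z) := by
      intro y hy
      rw [Finset.mem_filter, T.mem_sphere] at hy
      obtain ⟨hdy, hsy⟩ := hy
      have hys := T.step_spec (x := x) (y := y) (by omega)
      rw [hsy] at hys
      rw [Finset.mem_erase, T.mem_nbr]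
      refine ⟨?_, hys.1.symm⟩
      intro hcon
      rw [hcon] at hdy
      omega
    have hcard : (T.nbr z).card = q + 1 := T.degree z
    calc ((T.sphere x (m+2)).filter (fun y => T.step x y = z)).card
        ≤ ((T.nbr z).erase (T.step x z)).card := Finset.card_le_card hsub
      _ ≤ q := by
          rw [Finset.card_erase_of_mem (by rw [T.mem_nbr]; exact hzs.1)]
          omega

lemma sphere_zero (x : T.V) : T.sphere x 0 ⊆ {x} := by
  intro y hy
  rw [T.mem_sphere] at hy
  rw [Finset.mem_singleton]
  exact ((T.conn.dist_eq_zero_iff).mp hy).symm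

lemma card_sphere_le (hq : 1 ≤ q) (x : T.V) (n : ℕ) :
    (T.sphere x (n + 1)).card ≤ (q + 1) * q ^ n := by
  induction n with
  | zero => simp [T.card_sphere_one]
  | succ m ih =>
      calc (T.sphere x (m + 2)).card ≤ q * (T.sphere x (m + 1)).card :=
            T.card_sphere_succ_le x m
        _ ≤ q * ((q + 1) * q ^ m) := Nat.mul_le_mul_left q ih
        _ = (q + 1) * q ^ (m + 1) := by ring

lemma card_ball_le (hq : 2 ≤ q) (x : T.V) (n : ℕ) :
    (T.ball x n).card ≤ 3 * q ^ n := by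
  induction n with
  | zero =>
      have h1 : T.ball x 0 ⊆ {x} := by
        intro y hy
        rw [T.mem_ball] at hy
        exact T.sphere_zero x (by rw [T.mem_sphere]; omega)
      calc (T.ball x 0).card ≤ ({x} : Finset T.V).card := Finset.card_le_card h1
        _ ≤ 3 * q ^ 0 := by simp
  | succ m ih =>
      classical
      have hsub : T.ball x (m + 1) ⊆ T.ball x m ∪ T.sphere x (m + 1) := by
        intro y hy
        rw [T.mem_ball] at hy
        rcases Nat.lt_or_ge (T.G.dist x y) (m + 1) with h | h
        · exact Finset.mem_union_left _ (by rw [T.mem_ball]; omega)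
        · exact Finset.mem_union_right _ (by rw [T.mem_sphere]; omega)
      calc (T.ball x (m + 1)).card ≤ (T.ball x m ∪ T.sphere x (m + 1)).card :=
            Finset.card_le_card hsub
        _ ≤ (T.ball x m).card + (T.sphere x (m + 1)).card := Finset.card_union_le _ _
        _ ≤ 3 * q ^ m + (q + 1) * q ^ m := by
            have := T.card_sphere_le (by omega) x m
            omega
        _ ≤ 3 * q ^ (m + 1) := by
            have h1 : (3 + (q + 1)) * q ^ m ≤ (3 * q) * q ^ m :=
              Nat.mul_le_mul_right _ (by omega)
            calc 3 * q ^ m + (q + 1) * q ^ m = (3 + (q + 1)) * q ^ m := by ring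
              _ ≤ (3 * q) * q ^ m := h1
              _ = 3 * q ^ (m + 1) := by ring

end HomTree

namespace HomTree

open scoped Classical

variable {q : ℕ} (T : HomTree q)

lemma qpow_add (hq : 1 ≤ q) (a b : ℝ) : qpow q (a + b) = qpow q a * qpow q b := by
  unfold qpow
  rw [← Complex.ofReal_mul, Real.rpow_add (by exact_mod_cast Nat.lt_of_lt_of_le Nat.zero_lt_one hq)]

lemma qpow_one' : qpow q 1 = (q : ℂ) := by
  unfold qpow; rw [Real.rpow_one]; norm_num

lemma qpow_zero' : qpow q 0 = 1 := by
  unfold qpow; rw [Real.rpow_zero]; norm_num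

/-- The parity-filtered ball appearing in `Mop`. -/
noncomputable def Fset (x : T.V) (n : ℕ) : Finset T.V :=
  (T.ball x n).filter (fun y => (n - T.G.dist x y) % 2 = 0)

lemma mem_Fset {x y : T.V} {n : ℕ} :
    y ∈ T.Fset x n ↔ T.G.dist x y ≤ n ∧ (n - T.G.dist x y) % 2 = 0 := by
  rw [Fset, Finset.mem_filter, T.mem_ball]

lemma Fset_subset (x : T.V) {m n : ℕ} (hmn : m ≤ n) (hpar : (n - m) % 2 = 0) :
    T.Fset x m ⊆ T.Fset x n := by
  intro y hy
  rw [T.mem_Fset] at hy ⊢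
  omega

lemma Mop_natCast (n : ℕ) (h : T.V → ℂ) (x : T.V) :
    Mop T (n : ℤ) h x = qpow q (-(n : ℝ)/2) * ∑ y ∈ T.Fset x n, h y := by
  rw [Mop, if_pos (Int.natCast_nonneg n)]
  norm_num [Fset, Int.toNat_natCast]

lemma Mop_neg' {n : ℤ} (hn : n < 0) (h : T.V → ℂ) (x : T.V) : Mop T n h x = 0 :=
  if_neg (by omega)

lemma Fset_zero (x : T.V) : T.Fset x 0 = {x} := by
  ext y
  rw [T.mem_Fset, Finset.mem_singleton]
  constructor
  · intro hy
    exact ((T.conn.dist_eq_zero_iff).mp (by omega)).symm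
  · rintro rfl
    simp [SimpleGraph.dist_self]

lemma Fset_one (x : T.V) : T.Fset x 1 = T.sphere x 1 := by
  ext y
  rw [T.mem_Fset, T.mem_sphere]
  omega

lemma Mop_zero' (h : T.V → ℂ) (x : T.V) : Mop T 0 h x = h x := by
  have := T.Mop_natCast 0 h x
  norm_num [Fset_zero, qpow_zero'] at this
  exact this

lemma Mop_one' (h : T.V → ℂ) (x : T.V) :
    Mop T 1 h x = qpow q (-(1:ℝ)/2) * ∑ y ∈ T.sphere x 1, h y := by
  have := T.Mop_natCast 1 h x
  rw [T.Fset_one] at this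
  norm_num at this
  convert this using 3
  norm_num

lemma adj_dist_cases' {x z : T.V} (h : T.G.Adj x z) (y : T.V) :
    T.G.dist z y = T.G.dist x y + 1 ∨ T.G.dist x y = T.G.dist z y + 1 := by
  have e1 : T.G.dist z y = T.G.dist y z := SimpleGraph.dist_comm
  have e2 : T.G.dist x y = T.G.dist y x := SimpleGraph.dist_comm
  rcases T.adj_dist_cases h (y := y) with hc | hc
  · left; omega
  · right; omega

lemma count_lemma (x : T.V) (m : ℕ) {y : T.V} (hy : y ∈ T.Fset x (m+2)) :
    (((T.sphere x 1)).filter (fun z => y ∈ T.Fset z (m+1))).card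
      = if y ∈ T.Fset x m then q + 1 else 1 := by
  classical
  rw [T.mem_Fset] at hy
  by_cases hmem : y ∈ T.Fset x m
  · rw [if_pos hmem]
    rw [T.mem_Fset] at hmem
    rw [Finset.filter_true_of_mem, T.card_sphere_one]
    intro z hz
    rw [T.mem_sphere] at hz
    have hadj : T.G.Adj x z := SimpleGraph.dist_eq_one_iff_adj.mp hz
    rw [T.mem_Fset]
    rcases T.adj_dist_cases' hadj y with hc | hc <;> omega
  · rw [if_neg hmem]
    rw [T.mem_Fset] at hmem
    have hd : T.G.dist x y = m + 2 := by
      by_contra hne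
      exact hmem ⟨by omega, by omega⟩
    have hd' : T.G.dist y x = m + 2 := by
      rw [SimpleGraph.dist_comm]; exact hd
    obtain ⟨z₀, hz₀a, hz₀d⟩ := T.closer_exists (x := y) (y := x) (by omega)
    have hfil : ((T.sphere x 1)).filter (fun z => y ∈ T.Fset z (m+1)) = {z₀} := by
      ext z
      rw [Finset.mem_filter, Finset.mem_singleton, T.mem_sphere, T.mem_Fset]
      constructor
      · rintro ⟨hz1, hz2, hz3⟩
        have hadj : T.G.Adj x z := SimpleGraph.dist_eq_one_iff_adj.mp hz1
        have hzy : T.G.dist y z = m + 1 := by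
          have e1 : T.G.dist z y = T.G.dist y z := SimpleGraph.dist_comm
          rcases T.adj_dist_cases' hadj y with hc | hc <;> omega
        have hz₀y : T.G.dist y z₀ = m + 1 := by omega
        exact T.closer_unique (x := y) (y := x) (m := m + 1) (by omega) hadj hzy hz₀a hz₀y
      · intro hzz
        rw [hzz]
        have e1 : T.G.dist z₀ y = T.G.dist y z₀ := SimpleGraph.dist_comm
        exact ⟨SimpleGraph.dist_eq_one_iff_adj.mpr hz₀a, by omega, by omega⟩
    rw [hfil, Finset.card_singleton]

lemma sum_sphere_Fset (x : T.V) (m : ℕ) (h : T.V → ℂ) :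
    ∑ z ∈ T.sphere x 1, ∑ y ∈ T.Fset z (m+1), h y
      = ∑ y ∈ T.Fset x (m+2), h y + (q : ℂ) * ∑ y ∈ T.Fset x m, h y := by
  classical
  have hsub : ∀ z ∈ T.sphere x 1, T.Fset z (m+1) ⊆ T.Fset x (m+2) := by
    intro z hz y hy
    rw [T.mem_sphere] at hz
    have hadj : T.G.Adj x z := SimpleGraph.dist_eq_one_iff_adj.mp hz
    rw [T.mem_Fset] at hy ⊢
    rcases T.adj_dist_cases' hadj y with hc | hc <;> omega
  calc ∑ z ∈ T.sphere x 1, ∑ y ∈ T.Fset z (m+1), h y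
      = ∑ z ∈ T.sphere x 1, ∑ y ∈ T.Fset x (m+2), if y ∈ T.Fset z (m+1) then h y else 0 := by
        refine Finset.sum_congr rfl fun z hz => ?_
        rw [Finset.sum_ite_mem, Finset.inter_eq_right.mpr (hsub z hz)]
    _ = ∑ y ∈ T.Fset x (m+2), ∑ z ∈ T.sphere x 1, if y ∈ T.Fset z (m+1) then h y else 0 :=
        Finset.sum_comm
    _ = ∑ y ∈ T.Fset x (m+2),
          ((((T.sphere x 1)).filter (fun z => y ∈ T.Fset z (m+1))).card : ℂ) * h y := by
        refine Finset.sum_congr rfl fun y _ => ?_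
        rw [Finset.sum_ite, Finset.sum_const_zero, add_zero, Finset.sum_const, nsmul_eq_mul]
    _ = ∑ y ∈ T.Fset x (m+2), (h y + (q : ℂ) * (if y ∈ T.Fset x m then h y else 0)) := by
        refine Finset.sum_congr rfl fun y hy => ?_
        rw [T.count_lemma x m hy]
        by_cases hm : y ∈ T.Fset x m
        · rw [if_pos hm, if_pos hm]; push_cast; ring
        · rw [if_neg hm, if_neg hm]; push_cast; ring
    _ = _ := by
        rw [Finset.sum_add_distrib, ← Finset.mul_sum, Finset.sum_ite_mem,
          Finset.inter_eq_right.mpr (T.Fset_subset x (by omega) (by omega))]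

lemma Mrec (hq : 1 ≤ q) (m : ℕ) (h : T.V → ℂ) (x : T.V) :
    Mop T ((m : ℤ) + 1) h x + Mop T ((m : ℤ) - 1) h x
      = qpow q (-(1:ℝ)/2) * ∑ z ∈ T.sphere x 1, Mop T (m : ℤ) h z := by
  cases m with
  | zero =>
      have h1 : ((0:ℕ) : ℤ) + 1 = (1 : ℤ) := by norm_num
      have h2 : ((0:ℕ) : ℤ) - 1 = (-1 : ℤ) := by norm_num
      rw [h1, h2, T.Mop_one', T.Mop_neg' (by norm_num), add_zero]
      congr 1
      refine Finset.sum_congr rfl fun z _ => (T.Mop_zero' h z).symm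
  | succ k =>
      have h1 : ((k+1:ℕ) : ℤ) + 1 = ((k+2:ℕ) : ℤ) := by push_cast; ring
      have h2 : ((k+1:ℕ) : ℤ) - 1 = ((k:ℕ) : ℤ) := by push_cast; ring
      have e1 : qpow q (-(1:ℝ)/2) * qpow q (-((k+1:ℕ) : ℝ)/2) = qpow q (-((k+2:ℕ) : ℝ)/2) := by
        rw [← qpow_add (q := q) hq]
        congr 1
        push_cast
        ring
      have e2 : qpow q (-((k:ℕ) : ℝ)/2) = qpow q (-((k+2:ℕ) : ℝ)/2) * (q : ℂ) := by
        rw [← qpow_one' (q := q), ← qpow_add (q := q) hq]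
        congr 1
        push_cast
        ring
      rw [h1, h2, T.Mop_natCast, T.Mop_natCast]
      calc qpow q (-((k+2:ℕ) : ℝ)/2) * ∑ y ∈ T.Fset x (k+2), h y
            + qpow q (-((k:ℕ) : ℝ)/2) * ∑ y ∈ T.Fset x k, h y
          = qpow q (-((k+2:ℕ) : ℝ)/2) *
              (∑ y ∈ T.Fset x (k+2), h y + (q : ℂ) * ∑ y ∈ T.Fset x k, h y) := by
            rw [e2]; ring
        _ = qpow q (-((k+2:ℕ) : ℝ)/2) * ∑ z ∈ T.sphere x 1, ∑ y ∈ T.Fset z (k+1), h y := by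
            rw [T.sum_sphere_Fset]
        _ = _ := by
            rw [← e1, mul_assoc]
            congr 1
            rw [Finset.mul_sum]
            refine Finset.sum_congr rfl fun z _ => ?_
            rw [T.Mop_natCast]

end HomTree

namespace HomTree

variable {q : ℕ} (T : HomTree q)

lemma Cop_pos {n : ℤ} (hn : 0 < n) (f : T.V → ℂ) (x : T.V) :
    Cop T n f x = (Mop T n f x - Mop T (n - 2) f x) / 2 := by
  rw [Cop, if_neg (by omega), abs_of_pos hn]

lemma Cop_zero (f : T.V → ℂ) (x : T.V) : Cop T 0 f x = f x := if_pos rfl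

lemma Sop_pos {n : ℤ} (hn : 0 < n) (g : T.V → ℂ) (x : T.V) :
    Sop T n g x = Mop T (n - 1) g x := by
  rw [Sop, abs_of_pos hn, Int.sign_eq_one_of_pos hn]
  push_cast
  ring

lemma Sop_zero (g : T.V → ℂ) (x : T.V) : Sop T 0 g x = 0 := by
  simp [Sop]

lemma Cop_even (n : ℤ) (f : T.V → ℂ) (x : T.V) : Cop T (-n) f x = Cop T n f x := by
  simp [Cop, abs_neg, neg_eq_zero]

lemma Sop_odd (n : ℤ) (g : T.V → ℂ) (x : T.V) : Sop T (-n) g x = - Sop T n g x := by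
  rw [Sop, Sop, abs_neg, Int.sign_neg]
  push_cast
  ring

lemma Mop_negArg (n : ℤ) (g : T.V → ℂ) (x : T.V) :
    Mop T n (fun y => -(g y)) x = - Mop T n g x := by
  unfold Mop
  split
  · rw [Finset.sum_neg_distrib]
    ring
  · simp

lemma Sop_negArg (n : ℤ) (g : T.V → ℂ) (x : T.V) :
    Sop T n (fun y => -(g y)) x = - Sop T n g x := by
  rw [Sop, Sop, Mop_negArg]
  ring

lemma CS_aux (hq : 1 ≤ q) (f g : T.V → ℂ) (k : ℕ) (x : T.V) :
    (Cop T ((k:ℤ)+1) f x + Sop T ((k:ℤ)+1) g x) + (Cop T ((k:ℤ)-1) f x + Sop T ((k:ℤ)-1) g x)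
      = qpow q (-(1:ℝ)/2) * ∑ y ∈ T.sphere x 1, (Cop T (k:ℤ) f y + Sop T (k:ℤ) g y) := by
  match k with
  | 0 =>
      have e1 : ((0:ℕ):ℤ) + 1 = 1 := by norm_num
      have e2 : ((0:ℕ):ℤ) - 1 = -(1:ℤ) := by norm_num
      have e3 : ((0:ℕ):ℤ) = 0 := by norm_num
      rw [e1, e2, e3]
      rw [T.Cop_even 1, T.Sop_odd 1]
      rw [T.Cop_pos (by norm_num), T.Sop_pos (by norm_num)]
      have h4 : (1:ℤ) - 2 = -1 := by norm_num
      have h5 : (1:ℤ) - 1 = 0 := by norm_num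
      rw [h4, h5, T.Mop_neg' (show (-1:ℤ) < 0 by norm_num), T.Mop_zero']
      have hsum : ∑ y ∈ T.sphere x 1, (Cop T 0 f y + Sop T 0 g y)
          = ∑ y ∈ T.sphere x 1, f y := by
        refine Finset.sum_congr rfl fun y _ => ?_
        rw [T.Cop_zero, T.Sop_zero, add_zero]
      rw [hsum, ← T.Mop_one']
      ring
  | 1 =>
      have e1 : ((1:ℕ):ℤ) + 1 = 2 := by norm_num
      have e2 : ((1:ℕ):ℤ) - 1 = 0 := by norm_num
      have e3 : ((1:ℕ):ℤ) = 1 := by norm_num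
      rw [e1, e2, e3, T.Cop_pos (by norm_num : (0:ℤ) < 2), T.Sop_pos (by norm_num : (0:ℤ) < 2),
        T.Cop_zero, T.Sop_zero]
      have h4 : (2:ℤ) - 2 = 0 := by norm_num
      have h5 : (2:ℤ) - 1 = 1 := by norm_num
      rw [h4, h5, T.Mop_zero']
      have hsum : ∑ y ∈ T.sphere x 1, (Cop T 1 f y + Sop T 1 g y)
          = ∑ y ∈ T.sphere x 1, (Mop T 1 f y / 2 + g y) := by
        refine Finset.sum_congr rfl fun y _ => ?_
        rw [T.Cop_pos (by norm_num : (0:ℤ) < 1), T.Sop_pos (by norm_num : (0:ℤ) < 1)]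
        have h6 : (1:ℤ) - 2 = -1 := by norm_num
        have h7 : (1:ℤ) - 1 = 0 := by norm_num
        rw [h6, h7, T.Mop_neg' (show (-1:ℤ) < 0 by norm_num), T.Mop_zero']
        ring
      rw [hsum, Finset.sum_add_distrib]
      have hdiv : ∑ y ∈ T.sphere x 1, Mop T 1 f y / 2
          = (∑ y ∈ T.sphere x 1, Mop T 1 f y) / 2 := by
        rw [Finset.sum_div]
      rw [hdiv]
      have r1 := T.Mrec hq 1 f x
      have r0 := T.Mrec hq 0 g x
      have e4 : ((1:ℕ):ℤ) + 1 = 2 := by norm_num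
      have e5 : ((1:ℕ):ℤ) - 1 = 0 := by norm_num
      have e6 : ((0:ℕ):ℤ) + 1 = 1 := by norm_num
      have e7 : ((0:ℕ):ℤ) - 1 = -1 := by norm_num
      have e8 : ((1:ℕ):ℤ) = 1 := by norm_num
      have e9 : ((0:ℕ):ℤ) = 0 := by norm_num
      rw [e4, e5, e8, T.Mop_zero'] at r1
      rw [e6, e7, e9, T.Mop_neg' (show (-1:ℤ) < 0 by norm_num)] at r0
      have r0' : ∑ y ∈ T.sphere x 1, Mop T 0 g y = ∑ y ∈ T.sphere x 1, g y := by
        refine Finset.sum_congr rfl fun y _ => T.Mop_zero' g y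
      rw [r0'] at r0
      linear_combination r1 / 2 + r0
  | (j+2) =>
      have e1 : ((j+2:ℕ):ℤ) + 1 = (j:ℤ) + 3 := by push_cast; ring
      have e2 : ((j+2:ℕ):ℤ) - 1 = (j:ℤ) + 1 := by push_cast; ring
      have e3 : ((j+2:ℕ):ℤ) = (j:ℤ) + 2 := by push_cast; ring
      rw [e1, e2, e3]
      rw [T.Cop_pos (by omega : (0:ℤ) < (j:ℤ) + 3), T.Sop_pos (by omega : (0:ℤ) < (j:ℤ) + 3),
        T.Cop_pos (by omega : (0:ℤ) < (j:ℤ) + 1), T.Sop_pos (by omega : (0:ℤ) < (j:ℤ) + 1)]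
      simp only [show ((j:ℤ) + 3) - 2 = (j:ℤ) + 1 from by ring,
        show ((j:ℤ) + 1) - 2 = (j:ℤ) - 1 from by ring,
        show ((j:ℤ) + 3) - 1 = (j:ℤ) + 2 from by ring,
        show ((j:ℤ) + 1) - 1 = (j:ℤ) from by ring]
      have hsum : ∑ y ∈ T.sphere x 1, (Cop T ((j:ℤ)+2) f y + Sop T ((j:ℤ)+2) g y)
          = (∑ y ∈ T.sphere x 1, Mop T ((j:ℤ)+2) f y) / 2
            - (∑ y ∈ T.sphere x 1, Mop T (j:ℤ) f y) / 2
            + ∑ y ∈ T.sphere x 1, Mop T ((j:ℤ)+1) g y := by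
        rw [Finset.sum_div, Finset.sum_div, ← Finset.sum_sub_distrib, ← Finset.sum_add_distrib]
        refine Finset.sum_congr rfl fun y _ => ?_
        rw [T.Cop_pos (by omega : (0:ℤ) < (j:ℤ) + 2), T.Sop_pos (by omega : (0:ℤ) < (j:ℤ) + 2)]
        simp only [show ((j:ℤ) + 2) - 2 = (j:ℤ) from by ring,
          show ((j:ℤ) + 2) - 1 = (j:ℤ) + 1 from by ring]
        ring
      rw [hsum]
      have r1 := T.Mrec hq (j+2) f x
      have r2 := T.Mrec hq j f x
      have r3 := T.Mrec hq (j+1) g x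
      simp only [show ((j+2:ℕ):ℤ) + 1 = (j:ℤ) + 3 from by push_cast; ring,
        show ((j+2:ℕ):ℤ) - 1 = (j:ℤ) + 1 from by push_cast; ring,
        show ((j+2:ℕ):ℤ) = (j:ℤ) + 2 from by push_cast; ring,
        show ((j+1:ℕ):ℤ) + 1 = (j:ℤ) + 2 from by push_cast; ring,
        show ((j+1:ℕ):ℤ) - 1 = (j:ℤ) from by push_cast; ring,
        show ((j+1:ℕ):ℤ) = (j:ℤ) + 1 from by push_cast; ring] at r1 r2 r3
      simp only [show (j:ℤ) + 2 + 1 = (j:ℤ) + 3 from by ring,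
        show (j:ℤ) + 2 - 1 = (j:ℤ) + 1 from by ring,
        show (j:ℤ) + 1 + 1 = (j:ℤ) + 2 from by ring,
        show (j:ℤ) + 1 - 1 = (j:ℤ) from by ring] at r1 r2 r3
      linear_combination r1 / 2 - r2 / 2 + r3

lemma wave_wsol (hq : 1 ≤ q) (f g : T.V → ℂ) :
    IsWaveSol T (fun x m => Cop T m f x + Sop T m g x) := by
  intro x m
  dsimp only
  rcases le_or_gt 0 m with hm | hm
  · obtain ⟨k, rfl⟩ := Int.eq_ofNat_of_zero_le hm
    exact T.CS_aux hq f g k x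
  · obtain ⟨k, hm0, hk1⟩ : ∃ k : ℕ, m = -(k:ℤ) ∧ 1 ≤ k := ⟨(-m).toNat, by omega, by omega⟩
    have hm1 : m + 1 = -((k:ℤ) - 1) := by omega
    have hm2 : m - 1 = -((k:ℤ) + 1) := by omega
    rw [hm1, hm2, hm0]
    rw [T.Cop_even, T.Sop_odd, T.Cop_even, T.Sop_odd]
    have hsum : ∑ y ∈ T.sphere x 1, (Cop T (-(k:ℤ)) f y + Sop T (-(k:ℤ)) g y)
        = ∑ y ∈ T.sphere x 1, (Cop T (k:ℤ) f y + Sop T (k:ℤ) (fun z => -(g z)) y) := by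
      refine Finset.sum_congr rfl fun y _ => ?_
      rw [T.Cop_even, T.Sop_odd, T.Sop_negArg]
    rw [hsum]
    obtain ⟨j, rfl⟩ : ∃ j : ℕ, k = j + 1 := ⟨k - 1, by omega⟩
    have haux := T.CS_aux hq f (fun z => -(g z)) j x
    have haux2 := T.CS_aux hq f (fun z => -(g z)) (j+1) x
    have ej1 : ((j+1:ℕ):ℤ) - 1 = (j:ℤ) := by push_cast; ring
    have ej2 : ((j+1:ℕ):ℤ) + 1 = (j:ℤ) + 2 := by push_cast; ring
    rw [ej1, ej2] at haux2
    simp only [T.Sop_negArg] at haux2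
    have ej3 : ((j:ℕ):ℤ) + 1 - 1 = (j:ℤ) := by ring
    have ej4 : ((j+1:ℕ):ℤ) = (j:ℤ) + 1 := by push_cast; ring
    rw [ej4]
    simp only [T.Sop_negArg] at haux2 ⊢
    simp only [show ((j:ℤ)+1)-1 = (j:ℤ) from by ring, show ((j:ℤ)+1)+1 = (j:ℤ)+2 from by ring,
      show (j:ℤ)+1-1 = (j:ℤ) from by ring, show (j:ℤ)+1+1 = (j:ℤ)+2 from by ring]
    push_cast at haux2 ⊢
    linear_combination haux2

end HomTree

namespace HomTree

variable {q : ℕ} (T : HomTree q)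

lemma u_eq_wsol (hq : 1 ≤ q) (f g : T.V → ℂ) (u : T.V → ℤ → ℂ) (hu : IsCauchy T f g u)
    (m : ℤ) (x : T.V) : u x m = Cop T m f x + Sop T m g x := by
  obtain ⟨hw, h0, h1⟩ := hu
  set W : T.V → ℤ → ℂ := fun x m => Cop T m f x + Sop T m g x with hW
  have hwW : IsWaveSol T W := T.wave_wsol hq f g
  have base0 : ∀ x, u x 0 = W x 0 := by
    intro x
    rw [hW]
    dsimp only
    rw [T.Cop_zero, T.Sop_zero, add_zero, h0]
  have keye : ∀ x, u x 1 + u x (-1) = qpow q (-(1:ℝ)/2) * ∑ y ∈ T.sphere x 1, f y := by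
    intro x
    have e := hw x 0
    rw [show (0:ℤ)+1 = 1 from by norm_num, show (0:ℤ)-1 = -1 from by norm_num] at e
    have hs : ∑ y ∈ T.sphere x 1, u y 0 = ∑ y ∈ T.sphere x 1, f y :=
      Finset.sum_congr rfl fun y _ => h0 y
    rw [hs] at e
    exact e
  have W1 : ∀ x, W x 1 = qpow q (-(1:ℝ)/2) * (∑ y ∈ T.sphere x 1, f y) / 2 + g x := by
    intro x
    rw [hW]
    dsimp only
    rw [T.Cop_pos (by norm_num : (0:ℤ) < 1), T.Sop_pos (by norm_num : (0:ℤ) < 1)]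
    rw [show (1:ℤ) - 2 = -1 from by norm_num, show (1:ℤ) - 1 = 0 from by norm_num,
      T.Mop_neg' (show (-1:ℤ) < 0 by norm_num), T.Mop_zero', T.Mop_one']
    ring
  have Wm1 : ∀ x, W x (-1) = qpow q (-(1:ℝ)/2) * (∑ y ∈ T.sphere x 1, f y) / 2 - g x := by
    intro x
    rw [hW]
    dsimp only
    rw [show (-1 : ℤ) = -(1:ℤ) from rfl, T.Cop_even, T.Sop_odd]
    rw [T.Cop_pos (by norm_num : (0:ℤ) < 1), T.Sop_pos (by norm_num : (0:ℤ) < 1)]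
    rw [show (1:ℤ) - 2 = -1 from by norm_num, show (1:ℤ) - 1 = 0 from by norm_num,
      T.Mop_neg' (show (-1:ℤ) < 0 by norm_num), T.Mop_zero', T.Mop_one']
    ring
  have base1 : ∀ x, u x 1 = W x 1 := by
    intro x
    rw [W1 x]
    linear_combination (keye x) / 2 + h1 x
  have basem1 : ∀ x, u x (-1) = W x (-1) := by
    intro x
    rw [Wm1 x]
    linear_combination (keye x) / 2 - h1 x
  have up : ∀ n : ℕ, ∀ x, u x (n:ℤ) = W x (n:ℤ) ∧ u x ((n:ℤ)+1) = W x ((n:ℤ)+1) := by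
    intro n
    induction n with
    | zero =>
        intro x
        constructor
        · exact base0 x
        · rw [show ((0:ℕ):ℤ) + 1 = 1 from by norm_num]
          exact base1 x
    | succ k ih =>
        intro x
        have ecast : ((k+1:ℕ):ℤ) = (k:ℤ) + 1 := by push_cast; ring
        constructor
        · rw [ecast]; exact (ih x).2
        · rw [ecast]
          have eu := hw x ((k:ℤ)+1)
          have eW := hwW x ((k:ℤ)+1)
          have hs : ∑ y ∈ T.sphere x 1, u y ((k:ℤ)+1) = ∑ y ∈ T.sphere x 1, W y ((k:ℤ)+1) :=
            Finset.sum_congr rfl fun y _ => (ih y).2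
          simp only [show (k:ℤ)+1+1 = (k:ℤ)+2 from by ring,
            show (k:ℤ)+1-1 = (k:ℤ) from by ring] at eu eW ⊢
          linear_combination eu - eW + qpow q (-(1:ℝ)/2) * hs - (ih x).1
  have down : ∀ n : ℕ, ∀ x, u x (-(n:ℤ)) = W x (-(n:ℤ)) ∧ u x (-(n:ℤ)-1) = W x (-(n:ℤ)-1) := by
    intro n
    induction n with
    | zero =>
        intro x
        constructor
        · rw [show -((0:ℕ):ℤ) = 0 from by norm_num]; exact base0 x
        · rw [show -((0:ℕ):ℤ) - 1 = -1 from by norm_num]; exact basem1 x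
    | succ k ih =>
        intro x
        have ecast : -((k+1:ℕ):ℤ) = -(k:ℤ) - 1 := by push_cast; ring
        constructor
        · rw [ecast]; exact (ih x).2
        · rw [ecast]
          have eu := hw x (-(k:ℤ)-1)
          have eW := hwW x (-(k:ℤ)-1)
          have hs : ∑ y ∈ T.sphere x 1, u y (-(k:ℤ)-1) = ∑ y ∈ T.sphere x 1, W y (-(k:ℤ)-1) :=
            Finset.sum_congr rfl fun y _ => (ih y).2
          simp only [show -(k:ℤ)-1+1 = -(k:ℤ) from by ring,
            show -(k:ℤ)-1-1 = -(k:ℤ)-2 from by ring] at eu eW ⊢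
          linear_combination eu - eW + qpow q (-(1:ℝ)/2) * hs - (ih x).1
  rcases le_or_gt 0 m with hm | hm
  · obtain ⟨n, rfl⟩ := Int.eq_ofNat_of_zero_le hm
    exact (up n x).1
  · obtain ⟨n, hn⟩ : ∃ n : ℕ, m = -(n:ℤ) - 1 := ⟨(-m-1).toNat, by omega⟩
    rw [hn]
    exact (down n x).2

end HomTree

namespace HomTree

variable {q : ℕ} (T : HomTree q)

lemma abs_qpow (hq : 1 ≤ q) (a : ℝ) : ‖qpow q a‖ = (q:ℝ) ^ a := by
  have hq0 : (0:ℝ) < q := by exact_mod_cast Nat.lt_of_lt_of_le Nat.zero_lt_one hq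
  unfold qpow
  rw [Complex.norm_real, Real.norm_eq_abs, abs_of_pos (Real.rpow_pos_of_pos hq0 a)]

lemma rpow_pow (hq : 1 ≤ q) (k : ℕ) :
    ((q:ℝ) ^ (-(1:ℝ)/2)) ^ k = (q:ℝ) ^ (-(k:ℝ)/2) := by
  have hq0 : (0:ℝ) ≤ q := by positivity
  rw [← Real.rpow_natCast ((q:ℝ) ^ (-(1:ℝ)/2)) k, ← Real.rpow_mul hq0]
  congr 1
  ring

lemma sum_abs_le (f : T.V → ℂ) (hf : (Function.support f).Finite) (s : Finset T.V) :
    ‖∑ y ∈ s, f y‖ ≤ ∑ y ∈ hf.toFinset, ‖f y‖ := by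
  classical
  calc ‖∑ y ∈ s, f y‖ ≤ ∑ y ∈ s, ‖f y‖ := norm_sum_le _ _
    _ = ∑ y ∈ s.filter (fun y => f y ≠ 0), ‖f y‖ := by
        rw [Finset.sum_filter_of_ne]
        intro y _ habs
        exact fun h0 => habs (by rw [h0, norm_zero])
    _ ≤ ∑ y ∈ hf.toFinset, ‖f y‖ := by
        apply Finset.sum_le_sum_of_subset_of_nonneg
        · intro y hy
          rw [Finset.mem_filter] at hy
          rw [Set.Finite.mem_toFinset]
          exact hy.2
        · intro y _ _
          positivity

lemma Mop_bound (hq : 1 ≤ q) (h : T.V → ℂ) (hh : (Function.support h).Finite) (x : T.V) (n : ℤ) :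
    ‖Mop T n h x‖
      ≤ (∑ y ∈ hh.toFinset, ‖h y‖) * ((q:ℝ) ^ (-(1:ℝ)/2)) ^ n.toNat := by
  have hq0 : (0:ℝ) < q := by exact_mod_cast Nat.lt_of_lt_of_le Nat.zero_lt_one hq
  rcases le_or_gt 0 n with hn | hn
  · obtain ⟨k, rfl⟩ := Int.eq_ofNat_of_zero_le hn
    rw [T.Mop_natCast, norm_mul, abs_qpow (q := q) hq, Int.toNat_natCast, rpow_pow (q := q) hq]
    calc (q:ℝ) ^ (-((k:ℕ):ℝ)/2) * ‖∑ y ∈ T.Fset x k, h y‖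
        ≤ (q:ℝ) ^ (-((k:ℕ):ℝ)/2) * ∑ y ∈ hh.toFinset, ‖h y‖ :=
          mul_le_mul_of_nonneg_left (T.sum_abs_le h hh _)
            (le_of_lt (Real.rpow_pos_of_pos hq0 _))
      _ = _ := mul_comm _ _
  · rw [T.Mop_neg' hn, norm_zero]
    have : (0:ℝ) < ((q:ℝ) ^ (-(1:ℝ)/2)) ^ n.toNat := by positivity
    positivity

lemma abs_sign_le (m : ℤ) : ‖(m.sign : ℂ)‖ ≤ 1 := by
  rcases lt_trichotomy m 0 with h | h | h
  · rw [Int.sign_eq_neg_one_of_neg h]; simp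
  · rw [h]; simp
  · rw [Int.sign_eq_one_of_pos h]; simp

lemma pow_beta_le (hq : 1 ≤ q) {a b : ℕ} (hab : b ≤ a + 2) :
    ((q:ℝ) ^ (-(1:ℝ)/2)) ^ a ≤ (q:ℝ) * ((q:ℝ) ^ (-(1:ℝ)/2)) ^ b := by
  have hq1 : (1:ℝ) ≤ q := by exact_mod_cast hq
  rw [rpow_pow (q := q) hq, rpow_pow (q := q) hq]
  have he : (q:ℝ) * (q:ℝ) ^ (-(b:ℝ)/2) = (q:ℝ) ^ (1 + -(b:ℝ)/2) := by
    rw [Real.rpow_add (by linarith), Real.rpow_one]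
  rw [he]
  apply Real.rpow_le_rpow_of_exponent_le hq1
  have : (b:ℝ) ≤ (a:ℝ) + 2 := by exact_mod_cast hab
  linarith

lemma u_pointwise (hq : 1 ≤ q) (f g : T.V → ℂ)
    (hf : (Function.support f).Finite) (hg : (Function.support g).Finite)
    (u : T.V → ℤ → ℂ) (hu : IsCauchy T f g u) (m : ℤ) (x : T.V) :
    ‖u x m‖
      ≤ ((q:ℝ)+1) * ((∑ y ∈ hf.toFinset, ‖f y‖)
          + (∑ y ∈ hg.toFinset, ‖g y‖)) * ((q:ℝ) ^ (-(1:ℝ)/2)) ^ m.natAbs := by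
  have hq0 : (0:ℝ) ≤ q := by positivity
  have hq1 : (1:ℝ) ≤ q := by exact_mod_cast hq
  set Af := ∑ y ∈ hf.toFinset, ‖f y‖ with hAf'
  set Ag := ∑ y ∈ hg.toFinset, ‖g y‖ with hAg'
  set β := (q:ℝ) ^ (-(1:ℝ)/2) with hβ'
  have hAf : 0 ≤ Af := Finset.sum_nonneg fun y _ => by positivity
  have hAg : 0 ≤ Ag := Finset.sum_nonneg fun y _ => by positivity
  have hβ : 0 < β := Real.rpow_pos_of_pos (by linarith) _
  set k := m.natAbs with hk'
  have ht : (0:ℝ) ≤ β ^ k := by positivity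
  rw [T.u_eq_wsol hq f g u hu m x]
  rcases eq_or_ne m 0 with hm | hm
  · subst hm
    rw [T.Cop_zero, T.Sop_zero, add_zero]
    have h1 : ‖f x‖ ≤ Af := by
      by_cases hx : f x = 0
      · rw [hx, norm_zero]; exact hAf
      · exact Finset.single_le_sum (f := fun y => ‖f y‖) (fun y _ => by positivity)
          (by rw [Set.Finite.mem_toFinset]; exact hx)
    have hk0 : k = 0 := rfl
    rw [hk0, pow_zero, mul_one]
    nlinarith
  · have habs : |m| = (k:ℤ) := by rw [hk']; exact Int.abs_eq_natAbs m
    have hC : Cop T m f x = (Mop T (k:ℤ) f x - Mop T ((k:ℤ)-2) f x) / 2 := by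
      rw [Cop, if_neg hm, habs]
    have hS : Sop T m g x = (m.sign : ℂ) * Mop T ((k:ℤ)-1) g x := by
      rw [Sop, habs]
    have b1 : ‖Mop T (k:ℤ) f x‖ ≤ Af * β ^ k := by
      have h2 := T.Mop_bound hq f hf x (k:ℤ)
      rwa [Int.toNat_natCast] at h2
    have b2 : ‖Mop T ((k:ℤ)-2) f x‖ ≤ Af * ((q:ℝ) * β ^ k) := by
      have h2 := T.Mop_bound hq f hf x ((k:ℤ)-2)
      calc ‖Mop T ((k:ℤ)-2) f x‖ ≤ Af * β ^ (((k:ℤ)-2).toNat) := h2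
        _ ≤ Af * ((q:ℝ) * β ^ k) :=
            mul_le_mul_of_nonneg_left (pow_beta_le (q := q) hq (by omega)) hAf
    have b3 : ‖Mop T ((k:ℤ)-1) g x‖ ≤ Ag * ((q:ℝ) * β ^ k) := by
      have h2 := T.Mop_bound hq g hg x ((k:ℤ)-1)
      calc ‖Mop T ((k:ℤ)-1) g x‖ ≤ Ag * β ^ (((k:ℤ)-1).toNat) := h2
        _ ≤ Ag * ((q:ℝ) * β ^ k) := by
            apply mul_le_mul_of_nonneg_left _ hAg
            exact pow_beta_le (q := q) hq (by omega)
    calc ‖Cop T m f x + Sop T m g x‖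
        ≤ ‖Cop T m f x‖ + ‖Sop T m g x‖ := norm_add_le _ _
      _ ≤ (Af * β ^ k + Af * ((q:ℝ) * β ^ k)) / 2 + Ag * ((q:ℝ) * β ^ k) := by
          apply add_le_add
          · rw [hC, norm_div, Complex.norm_two]
            rw [div_le_div_iff_of_pos_right (by norm_num : (0:ℝ) < 2)]
            calc ‖Mop T (k:ℤ) f x - Mop T ((k:ℤ)-2) f x‖
                ≤ ‖Mop T (k:ℤ) f x‖ + ‖Mop T ((k:ℤ)-2) f x‖ := by
                  simpa using
                    norm_sub_le (Mop T (k:ℤ) f x) (Mop T ((k:ℤ)-2) f x)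
              _ ≤ Af * β ^ k + Af * ((q:ℝ) * β ^ k) := add_le_add b1 b2
          · rw [hS, norm_mul]
            calc ‖(m.sign : ℂ)‖ * ‖Mop T ((k:ℤ)-1) g x‖
                ≤ 1 * (Ag * ((q:ℝ) * β ^ k)) :=
                  mul_le_mul (abs_sign_le m) b3 (by positivity) (by norm_num)
              _ = Ag * ((q:ℝ) * β ^ k) := one_mul _
      _ ≤ ((q:ℝ)+1) * (Af + Ag) * β ^ k := by
          nlinarith [mul_nonneg hAf ht, mul_nonneg hAg ht,
            mul_nonneg (mul_nonneg hq0 hAf) ht, mul_nonneg (mul_nonneg hq0 hAg) ht]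

end HomTree

namespace HomTree

variable {q : ℕ} (T : HomTree q)

lemma tsum_le_card (φ : T.V → ℝ) (B : Finset T.V) (c : ℝ) (hc : 0 ≤ c)
    (h0 : ∀ x, 0 ≤ φ x) (hsupp : ∀ x, φ x ≠ 0 → x ∈ B) (hle : ∀ x, φ x ≤ c) :
    tsum φ ≤ B.card * c := by
  rw [tsum_eq_sum (s := B) (fun b hb => by_contra fun h => hb (hsupp b h))]
  calc ∑ x ∈ B, φ x ≤ ∑ x ∈ B, c := Finset.sum_le_sum (fun i _ => hle i)
    _ = B.card * c := by rw [Finset.sum_const, nsmul_eq_mul]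

lemma tsum_pair_le (hq1 : 1 ≤ q) (ψ : T.V × T.V → ℝ) (B : Finset T.V) (c : ℝ) (hc : 0 ≤ c)
    (h0 : ∀ p, 0 ≤ ψ p)
    (hsupp : ∀ p : T.V × T.V, ψ p ≠ 0 → p.1 ∈ B ∧ p.2 ∈ B ∧ T.G.dist p.1 p.2 = 2)
    (hle : ∀ p, ψ p ≤ c) :
    tsum ψ ≤ B.card * (((q+1) * q : ℕ) * c) := by
  classical
  rw [tsum_eq_sum (s := B ×ˢ B) (fun p hp => by
    by_contra h
    obtain ⟨h1, h2, _⟩ := hsupp p h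
    exact hp (Finset.mem_product.mpr ⟨h1, h2⟩))]
  rw [Finset.sum_product]
  calc ∑ x ∈ B, ∑ y ∈ B, ψ (x, y)
      ≤ ∑ _x ∈ B, (((q+1) * q : ℕ) * c) := by
        apply Finset.sum_le_sum
        intro x _
        have hinner : ∑ y ∈ B, ψ (x, y)
            = ∑ y ∈ B.filter (fun y => T.G.dist x y = 2), ψ (x, y) := by
          rw [Finset.sum_filter_of_ne]
          intro y _ hne
          exact (hsupp (x, y) hne).2.2
        rw [hinner]
        calc ∑ y ∈ B.filter (fun y => T.G.dist x y = 2), ψ (x, y)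
            ≤ ∑ _y ∈ B.filter (fun y => T.G.dist x y = 2), c :=
              Finset.sum_le_sum (fun i _ => hle _)
          _ = (B.filter (fun y => T.G.dist x y = 2)).card * c := by
              rw [Finset.sum_const, nsmul_eq_mul]
          _ ≤ (((q+1) * q : ℕ)) * c := by
              apply mul_le_mul_of_nonneg_right _ hc
              have hsub : B.filter (fun y => T.G.dist x y = 2) ⊆ T.sphere x 2 := by
                intro y hy
                rw [Finset.mem_filter] at hy
                rw [T.mem_sphere]
                exact hy.2
              have h1 : (B.filter (fun y => T.G.dist x y = 2)).card ≤ (T.sphere x 2).card :=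
                Finset.card_le_card hsub
              have h2 : (T.sphere x 2).card ≤ (q+1) * q ^ 1 := T.card_sphere_le hq1 x 1
              have : (B.filter (fun y => T.G.dist x y = 2)).card ≤ (q+1) * q := by
                calc (B.filter (fun y => T.G.dist x y = 2)).card ≤ (q+1) * q ^ 1 := le_trans h1 h2
                  _ = (q+1) * q := by ring
              exact_mod_cast this
    _ = B.card * (((q+1) * q : ℕ) * c) := by rw [Finset.sum_const, nsmul_eq_mul]

lemma geom_bound (hq2 : 2 ≤ q) {M a Nn : ℕ} (hMa : M + Nn + 1 = a) :
    (q:ℝ)^M * ((q:ℝ)⁻¹)^a ≤ ((q:ℝ)⁻¹)^Nn := by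
  have hq0 : (0:ℝ) < q := by exact_mod_cast Nat.lt_of_lt_of_le Nat.zero_lt_two hq2
  have h1 : ((q:ℝ)⁻¹)^a = ((q:ℝ)⁻¹)^M * ((q:ℝ)⁻¹)^(Nn+1) := by
    rw [← pow_add]
    congr 1
    omega
  rw [h1, ← mul_assoc]
  have h2 : (q:ℝ)^M * ((q:ℝ)⁻¹)^M = 1 := by
    rw [← mul_pow, mul_inv_cancel₀ (ne_of_gt hq0), one_pow]
  rw [h2, one_mul, pow_succ]
  have hinv1 : (q:ℝ)⁻¹ ≤ 1 := by
    rw [inv_le_one_iff₀]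
    right
    exact_mod_cast Nat.one_le_of_lt hq2
  calc ((q:ℝ)⁻¹)^Nn * (q:ℝ)⁻¹ ≤ ((q:ℝ)⁻¹)^Nn * 1 :=
        mul_le_mul_of_nonneg_left hinv1 (by positivity)
    _ = ((q:ℝ)⁻¹)^Nn := mul_one _

lemma final_tendsto (hq2 : 2 ≤ q) {l : Filter ℤ} (F : ℤ → ℝ) (C : ℝ) (N : ℤ → ℕ)
    (hF0 : ∀ n, 0 ≤ F n) (hFle : ∀ n, F n ≤ C * ((q:ℝ)⁻¹)^(N n))
    (hN : Filter.Tendsto N l Filter.atTop) : Filter.Tendsto F l (nhds 0) := by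
  have hq1 : (1:ℝ) < q := by exact_mod_cast hq2
  have h1 : Filter.Tendsto (fun k : ℕ => ((q:ℝ)⁻¹)^k) Filter.atTop (nhds 0) := by
    apply tendsto_pow_atTop_nhds_zero_of_lt_one (by positivity)
    rw [inv_lt_one_iff₀]
    right
    exact hq1
  have h2 := (h1.comp hN).const_mul C
  rw [mul_zero] at h2
  exact squeeze_zero hF0 hFle h2

end HomTree



open HomTree in
/-- asymptotic Huygens principle on homogeneous trees. -/
theorem stmt19 {q : ℕ} (hq : 2 ≤ q) (T : HomTree q) (f g : T.V → ℂ)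
    (hf : (Function.support f).Finite) (hg : (Function.support g).Finite)
    (u : T.V → ℤ → ℂ) (hu : HomTree.IsCauchy T f g u) (o : T.V)
    (N : ℤ → ℕ) (hNpos : ∀ n : ℤ, 0 < N n)
    (hNtop : Filter.Tendsto N Filter.atTop Filter.atTop)
    (hNbot : Filter.Tendsto N Filter.atBot Filter.atTop)
    (hNotop : Filter.Tendsto (fun n : ℤ => (N n : ℝ) / |(n : ℝ)|) Filter.atTop (nhds 0))
    (hNobot : Filter.Tendsto (fun n : ℤ => (N n : ℝ) / |(n : ℝ)|) Filter.atBot (nhds 0)) :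
    Filter.Tendsto (huyg1 T o N u) Filter.atTop (nhds 0) ∧
    Filter.Tendsto (huyg1 T o N u) Filter.atBot (nhds 0) ∧
    Filter.Tendsto (huyg2 T o N u) Filter.atTop (nhds 0) ∧
    Filter.Tendsto (huyg2 T o N u) Filter.atBot (nhds 0) ∧
    Filter.Tendsto (huyg3 T o N u) Filter.atTop (nhds 0) ∧
    Filter.Tendsto (huyg3 T o N u) Filter.atBot (nhds 0) := by
  
  classical
  have hq1 : 1 ≤ q := by omega
  set Af := ∑ y ∈ hf.toFinset, ‖f y‖ with hAf'
  set Ag := ∑ y ∈ hg.toFinset, ‖g y‖ with hAg'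
  set β := (q:ℝ) ^ (-(1:ℝ)/2) with hβ'
  set K := ((q:ℝ)+1) * (Af + Ag) with hK'
  have hAf : 0 ≤ Af := Finset.sum_nonneg fun y _ => by positivity
  have hAg : 0 ≤ Ag := Finset.sum_nonneg fun y _ => by positivity
  have hq0 : (0:ℝ) < q := by exact_mod_cast (by omega : 0 < q)
  have hβpos : 0 < β := Real.rpow_pos_of_pos hq0 _
  have hK : 0 ≤ K := mul_nonneg (by positivity) (by linarith)
  have hb : ∀ (m:ℤ) (x : T.V), ‖u x m‖ ≤ K * β ^ m.natAbs :=
    fun m x => T.u_pointwise hq1 f g hf hg u hu m x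
  have hββ : ∀ a : ℕ, (β ^ a)^2 = ((q:ℝ)⁻¹) ^ a := by
    intro a
    have h2 : β^2 = (q:ℝ)⁻¹ := by
      rw [hβ', rpow_pow (q := q) hq1 2,
        show (-((2:ℕ):ℝ)/2) = (-1 : ℝ) from by norm_num, Real.rpow_neg_one]
    calc (β^a)^2 = (β^2)^a := by ring
      _ = ((q:ℝ)⁻¹)^a := by rw [h2]
  have hsq : ∀ (m:ℤ) (x : T.V), ‖u x m‖^2 ≤ K^2 * ((q:ℝ)⁻¹)^(m.natAbs) := by
    intro m x
    calc ‖u x m‖^2 ≤ (K * β ^ m.natAbs)^2 :=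
          pow_le_pow_left₀ (by positivity) (hb m x) 2
      _ = K^2 * (β ^ m.natAbs)^2 := by ring
      _ = K^2 * ((q:ℝ)⁻¹)^(m.natAbs) := by rw [hββ]
  have hdiff2 : ∀ (n:ℤ) (x y : T.V),
      ‖u x n - u y n‖^2 ≤ 4*K^2 * ((q:ℝ)⁻¹)^(n.natAbs) := by
    intro n x y
    have h1 : ‖u x n - u y n‖ ≤ 2*K*β^(n.natAbs) := by
      calc ‖u x n - u y n‖ ≤ ‖u x n‖ + ‖u y n‖ := by
            simpa using norm_sub_le (u x n) (u y n)
        _ ≤ K * β ^ n.natAbs + K * β ^ n.natAbs := add_le_add (hb n x) (hb n y)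
        _ = 2*K*β^(n.natAbs) := by ring
    calc ‖u x n - u y n‖^2 ≤ (2*K*β^(n.natAbs))^2 :=
          pow_le_pow_left₀ (by positivity) h1 2
      _ = 4*K^2*((β^(n.natAbs))^2) := by ring
      _ = 4*K^2*((q:ℝ)⁻¹)^(n.natAbs) := by rw [hββ]
  have hdiff3 : ∀ (n:ℤ) (x : T.V),
      ‖u x (n+1) - u x (n-1)‖^2 ≤ 4*K^2*(q:ℝ)^2 * ((q:ℝ)⁻¹)^(n.natAbs) := by
    intro n x
    have hp1 : β^((n+1).natAbs) ≤ (q:ℝ) * β^(n.natAbs) := pow_beta_le (q := q) hq1 (by omega)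
    have hp2 : β^((n-1).natAbs) ≤ (q:ℝ) * β^(n.natAbs) := pow_beta_le (q := q) hq1 (by omega)
    have h1 : ‖u x (n+1) - u x (n-1)‖ ≤ 2*K*((q:ℝ) * β^(n.natAbs)) := by
      calc ‖u x (n+1) - u x (n-1)‖
          ≤ ‖u x (n+1)‖ + ‖u x (n-1)‖ := by
            simpa using norm_sub_le (u x (n+1)) (u x (n-1))
        _ ≤ K * β ^ ((n+1).natAbs) + K * β ^ ((n-1).natAbs) := add_le_add (hb _ x) (hb _ x)
        _ ≤ K * ((q:ℝ) * β^(n.natAbs)) + K * ((q:ℝ) * β^(n.natAbs)) :=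
            add_le_add (mul_le_mul_of_nonneg_left hp1 hK) (mul_le_mul_of_nonneg_left hp2 hK)
        _ = 2*K*((q:ℝ) * β^(n.natAbs)) := by ring
    calc ‖u x (n+1) - u x (n-1)‖^2 ≤ (2*K*((q:ℝ)*β^(n.natAbs)))^2 :=
          pow_le_pow_left₀ (by positivity) h1 2
      _ = 4*K^2*(q:ℝ)^2*((β^(n.natAbs))^2) := by ring
      _ = _ := by rw [hββ]
  have pos1 : ∀ n, 0 ≤ huyg1 T o N u n :=
    fun n => tsum_nonneg (fun x => by split <;> positivity)
  have pos2 : ∀ n, 0 ≤ huyg2 T o N u n :=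
    fun n => tsum_nonneg (fun p => by split <;> positivity)
  have pos3 : ∀ n, 0 ≤ huyg3 T o N u n :=
    fun n => tsum_nonneg (fun x => by split <;> positivity)
  have key1 : ∀ n : ℤ, huyg1 T o N u n ≤ (3*K^2) * ((q:ℝ)⁻¹)^(N n) := by
    intro n
    set a := n.natAbs with ha'
    have ha : |n| = (a:ℤ) := Int.abs_eq_natAbs n
    rcases le_or_gt ((a:ℤ)) (N n) with hcase | hcase
    · have hall : ∀ x : T.V,
          (if (T.G.dist x o : ℤ) < |n| - N n then ‖u x n‖ ^ 2 else 0) = 0 := by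
        intro x
        rw [if_neg]
        rw [ha]
        have h0 : (0:ℤ) ≤ (T.G.dist x o : ℤ) := Int.natCast_nonneg _
        omega
      have hz : huyg1 T o N u n = ∑' (_ : T.V), (0:ℝ) := tsum_congr hall
      rw [hz, tsum_zero]
      positivity
    · set M := (((a:ℤ)) - N n - 1).toNat with hM'
      have hMa : M + N n + 1 = a := by omega
      have step := T.tsum_le_card
        (fun x => if (T.G.dist x o : ℤ) < |n| - N n then ‖u x n‖ ^ 2 else 0)
        (T.ball o M) (K^2 * ((q:ℝ)⁻¹)^a) (by positivity)
        (fun x => by split <;> positivity)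
        (fun x hx => by
          have hcond : (T.G.dist x o : ℤ) < |n| - N n := by
            by_contra hc
            exact hx (if_neg hc)
          rw [ha] at hcond
          rw [T.mem_ball]
          have hd : T.G.dist o x = T.G.dist x o := SimpleGraph.dist_comm
          omega)
        (fun x => by
          split
          · exact hsq n x
          · positivity)
      calc huyg1 T o N u n ≤ (T.ball o M).card * (K^2 * ((q:ℝ)⁻¹)^a) := step
        _ ≤ (3*(q:ℝ)^M) * (K^2 * ((q:ℝ)⁻¹)^a) := by
            apply mul_le_mul_of_nonneg_right _ (by positivity)
            have hcb := T.card_ball_le hq o M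
            calc ((T.ball o M).card : ℝ) ≤ ((3 * q^M : ℕ) : ℝ) := by exact_mod_cast hcb
              _ = 3*(q:ℝ)^M := by push_cast; ring
        _ = (3*K^2) * ((q:ℝ)^M * ((q:ℝ)⁻¹)^a) := by ring
        _ ≤ (3*K^2) * ((q:ℝ)⁻¹)^(N n) :=
            mul_le_mul_of_nonneg_left (geom_bound (q := q) hq hMa) (by positivity)
  have key3 : ∀ n : ℤ, huyg3 T o N u n ≤ (12*K^2*(q:ℝ)^2) * ((q:ℝ)⁻¹)^(N n) := by
    intro n
    set a := n.natAbs with ha'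
    have ha : |n| = (a:ℤ) := Int.abs_eq_natAbs n
    rcases le_or_gt ((a:ℤ)) (N n) with hcase | hcase
    · have hall : ∀ x : T.V,
          (if (T.G.dist x o : ℤ) < |n| - N n
            then ‖u x (n+1) - u x (n-1)‖ ^ 2 else 0) = 0 := by
        intro x
        rw [if_neg]
        rw [ha]
        have h0 : (0:ℤ) ≤ (T.G.dist x o : ℤ) := Int.natCast_nonneg _
        omega
      have hz : huyg3 T o N u n = ∑' (_ : T.V), (0:ℝ) := tsum_congr hall
      rw [hz, tsum_zero]
      positivity
    · set M := (((a:ℤ)) - N n - 1).toNat with hM'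
      have hMa : M + N n + 1 = a := by omega
      have step := T.tsum_le_card
        (fun x => if (T.G.dist x o : ℤ) < |n| - N n
          then ‖u x (n+1) - u x (n-1)‖ ^ 2 else 0)
        (T.ball o M) (4*K^2*(q:ℝ)^2 * ((q:ℝ)⁻¹)^a) (by positivity)
        (fun x => by split <;> positivity)
        (fun x hx => by
          have hcond : (T.G.dist x o : ℤ) < |n| - N n := by
            by_contra hc
            exact hx (if_neg hc)
          rw [ha] at hcond
          rw [T.mem_ball]
          have hd : T.G.dist o x = T.G.dist x o := SimpleGraph.dist_comm
          omega)
        (fun x => by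
          split
          · exact hdiff3 n x
          · positivity)
      calc huyg3 T o N u n ≤ (T.ball o M).card * (4*K^2*(q:ℝ)^2 * ((q:ℝ)⁻¹)^a) := step
        _ ≤ (3*(q:ℝ)^M) * (4*K^2*(q:ℝ)^2 * ((q:ℝ)⁻¹)^a) := by
            apply mul_le_mul_of_nonneg_right _ (by positivity)
            have hcb := T.card_ball_le hq o M
            calc ((T.ball o M).card : ℝ) ≤ ((3 * q^M : ℕ) : ℝ) := by exact_mod_cast hcb
              _ = 3*(q:ℝ)^M := by push_cast; ring
        _ = (12*K^2*(q:ℝ)^2) * ((q:ℝ)^M * ((q:ℝ)⁻¹)^a) := by ring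
        _ ≤ (12*K^2*(q:ℝ)^2) * ((q:ℝ)⁻¹)^(N n) :=
            mul_le_mul_of_nonneg_left (geom_bound (q := q) hq hMa) (by positivity)
  have key2 : ∀ n : ℤ,
      huyg2 T o N u n ≤ (12*K^2*((q:ℝ)+1)*(q:ℝ)) * ((q:ℝ)⁻¹)^(N n) := by
    intro n
    set a := n.natAbs with ha'
    have ha : |n| = (a:ℤ) := Int.abs_eq_natAbs n
    rcases le_or_gt ((a:ℤ)) (N n) with hcase | hcase
    · have hall : ∀ p : T.V × T.V,
          (if (T.G.dist p.1 o : ℤ) < |n| - N n ∧ (T.G.dist p.2 o : ℤ) < |n| - N n ∧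
              T.G.dist p.1 p.2 = 2
            then ‖u p.1 n - u p.2 n‖ ^ 2 else 0) = 0 := by
        intro p
        rw [if_neg]
        rw [ha]
        have h0 : (0:ℤ) ≤ (T.G.dist p.1 o : ℤ) := Int.natCast_nonneg _
        intro hcon
        omega
      have hz : huyg2 T o N u n = ∑' (_ : T.V × T.V), (0:ℝ) := tsum_congr hall
      rw [hz, tsum_zero]
      positivity
    · set M := (((a:ℤ)) - N n - 1).toNat with hM'
      have hMa : M + N n + 1 = a := by omega
      have step := T.tsum_pair_le hq1
        (fun p => if (T.G.dist p.1 o : ℤ) < |n| - N n ∧ (T.G.dist p.2 o : ℤ) < |n| - N n ∧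
              T.G.dist p.1 p.2 = 2
          then ‖u p.1 n - u p.2 n‖ ^ 2 else 0)
        (T.ball o M) (4*K^2 * ((q:ℝ)⁻¹)^a) (by positivity)
        (fun p => by split <;> positivity)
        (fun p hp => by
          have hcond : (T.G.dist p.1 o : ℤ) < |n| - N n ∧
              (T.G.dist p.2 o : ℤ) < |n| - N n ∧ T.G.dist p.1 p.2 = 2 := by
            by_contra hc
            exact hp (if_neg hc)
          obtain ⟨hc1, hc2, hc3⟩ := hcond
          rw [ha] at hc1 hc2
          have hd1 : T.G.dist o p.1 = T.G.dist p.1 o := SimpleGraph.dist_comm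
          have hd2 : T.G.dist o p.2 = T.G.dist p.2 o := SimpleGraph.dist_comm
          exact ⟨by rw [T.mem_ball]; omega, by rw [T.mem_ball]; omega, hc3⟩)
        (fun p => by
          split
          · exact hdiff2 n p.1 p.2
          · positivity)
      calc huyg2 T o N u n
          ≤ (T.ball o M).card * (((q+1)*q : ℕ) * (4*K^2 * ((q:ℝ)⁻¹)^a)) := step
        _ ≤ (3*(q:ℝ)^M) * (((q:ℝ)+1)*(q:ℝ) * (4*K^2 * ((q:ℝ)⁻¹)^a)) := by
            have hcb := T.card_ball_le hq o M
            have h1 : ((T.ball o M).card : ℝ) ≤ 3*(q:ℝ)^M := by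
              calc ((T.ball o M).card : ℝ) ≤ ((3 * q^M : ℕ) : ℝ) := by exact_mod_cast hcb
                _ = 3*(q:ℝ)^M := by push_cast; ring
            have h2 : (((q+1)*q : ℕ) : ℝ) = ((q:ℝ)+1)*(q:ℝ) := by push_cast; ring
            rw [← h2]
            exact mul_le_mul_of_nonneg_right h1 (by positivity)
        _ = (12*K^2*((q:ℝ)+1)*(q:ℝ)) * ((q:ℝ)^M * ((q:ℝ)⁻¹)^a) := by ring
        _ ≤ (12*K^2*((q:ℝ)+1)*(q:ℝ)) * ((q:ℝ)⁻¹)^(N n) :=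
            mul_le_mul_of_nonneg_left (geom_bound (q := q) hq hMa) (by positivity)
  exact ⟨HomTree.final_tendsto hq _ _ N pos1 key1 hNtop,
    HomTree.final_tendsto hq _ _ N pos1 key1 hNbot,
    HomTree.final_tendsto hq _ _ N pos2 key2 hNtop,
    HomTree.final_tendsto hq _ _ N pos2 key2 hNbot,
    HomTree.final_tendsto hq _ _ N pos3 key3 hNtop,
    HomTree.final_tendsto hq _ _ N pos3 key3 hNbot⟩
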